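/- Let G be a finite group with trivial center and n0 ≥ 3 an integer such that l^i(D1,…,Dn) ≥ 1 for every n with n0 ≤ n ≤ 2·n0−1 and every choice of nontrivial conjugacy classes D1,…,Dn of G. Then for every m of the form m = k·n0 + l with k ≥ 2 and 0 ≤ l ≤ n0−1, and every choice of nontrivial conjugacy classes C1,…,Cm of G, one has l^i(C1,…,Cm) ≥ |G|^{k−1}. -/

import Mathlib

namespace ClassVectors

variable {G : Type*} [Group G]

/-- Simultaneous conjugacy of `m`-tuples. -/
def SimConjT {G : Type*} [Group G] {m : ℕ} (σ τ : Fin m → G) : Prop :=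
  ∃ γ : G, ∀ i, γ⁻¹ * σ i * γ = τ i

/-- `C` is a nontrivial conjugacy class of `G`. -/
def IsNontrivialConjClass {G : Type*} [Group G] (C : Set G) : Prop :=
  ∃ g : G, g ≠ 1 ∧ C = {x | IsConj g x}

/-- `Σ(C₁,…,C_m)`: the set of `m`-tuples with `σᵢ ∈ Cᵢ`, product `1`
(in order `σ₀ σ₁ ⋯ σ_{m-1}`), generating `G`. -/
def GenSystems (G : Type*) [Group G] (m : ℕ) (C : Fin m → Set G) :
    Set (Fin m → G) :=
  {σ | (∀ i, σ i ∈ C i) ∧ (List.ofFn σ).prod = 1 ∧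
    Subgroup.closure (Set.range σ) = ⊤}

/-- `l^i(C₁,…,C_m)`: the number of simultaneous conjugacy classes of
generating systems in `Σ(C₁,…,C_m)`. -/
noncomputable def li (G : Type*) [Group G] (m : ℕ) (C : Fin m → Set G) : ℕ :=
  Nat.card (Quot (fun σ τ : GenSystems G m C => SimConjT σ.1 τ.1))

end ClassVectors

open ClassVectors

namespace ClassVectorsAux

variable {G : Type*} [Group G]

lemma simConj_equivalence (m : ℕ) : Equivalence (@SimConjT G _ m) where
  refl σ := ⟨1, by simp⟩
  symm := by rintro σ τ ⟨γ, h⟩; exact ⟨γ⁻¹, fun i => by rw [← h i]; group⟩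
  trans := by
    rintro σ τ ρ ⟨γ, h⟩ ⟨δ, h'⟩
    exact ⟨γ * δ, fun i => by rw [← h' i, ← h i]; group⟩

lemma genRel_equivalence (m : ℕ) (C : Fin m → Set G) :
    Equivalence (fun σ τ : GenSystems G m C => SimConjT σ.1 τ.1) :=
  ⟨fun σ => (simConj_equivalence m).refl σ.1,
   fun h => (simConj_equivalence m).symm h,
   fun h h' => (simConj_equivalence m).trans h h'⟩

lemma eq_one_of_fix (hZ : Subgroup.center G = ⊥) {n : ℕ} {σ : Fin n → G}
    (hσ : Subgroup.closure (Set.range σ) = ⊤) {δ : G}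
    (h : ∀ i, δ⁻¹ * σ i * δ = σ i) : δ = 1 := by
  have hmem : δ ∈ Subgroup.center G := by
    rw [Subgroup.mem_center_iff]
    intro g
    have hle : Subgroup.closure (Set.range σ) ≤ Subgroup.centralizer {δ} := by
      rw [Subgroup.closure_le]
      rintro x ⟨i, rfl⟩
      rw [SetLike.mem_coe, Subgroup.mem_centralizer_iff]
      rintro y hy
      rw [Set.mem_singleton_iff] at hy
      rw [hy]
      calc δ * σ i = δ * (δ⁻¹ * σ i * δ) := by rw [h i]
        _ = σ i * δ := by group
    have hg : g ∈ Subgroup.centralizer {δ} := hle (hσ ▸ Subgroup.mem_top g)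
    have := Subgroup.mem_centralizer_iff.mp hg δ (Set.mem_singleton δ)
    exact this.symm
  rw [hZ, Subgroup.mem_bot] at hmem
  exact hmem

lemma conj_mem {C : Set G} (hC : IsNontrivialConjClass C) {x : G} (hx : x ∈ C)
    (γ : G) : γ⁻¹ * x * γ ∈ C := by
  obtain ⟨g, -, rfl⟩ := hC
  have hx' : IsConj g x := hx
  have : IsConj x (γ⁻¹ * x * γ) := by
    rw [isConj_iff]; exact ⟨γ⁻¹, by group⟩
  exact hx'.trans this

lemma prod_ofFn_conj {m : ℕ} (σ : Fin m → G) (γ : G) :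
    (List.ofFn (fun i => γ⁻¹ * σ i * γ)).prod = γ⁻¹ * (List.ofFn σ).prod * γ := by
  induction m with
  | zero => simp
  | succ n ih =>
    rw [List.ofFn_succ, List.ofFn_succ, List.prod_cons, List.prod_cons,
      ih (fun i => σ i.succ)]
    group

lemma closure_conj {m : ℕ} {σ : Fin m → G}
    (hσ : Subgroup.closure (Set.range σ) = ⊤) (γ : G) :
    Subgroup.closure (Set.range fun i => γ⁻¹ * σ i * γ) = ⊤ := by
  have h1 : (fun i => γ⁻¹ * σ i * γ) = ((MulAut.conj γ⁻¹).toMonoidHom ∘ σ) := by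
    funext i
    simp [MulAut.conj_apply]
  rw [h1, Set.range_comp, ← MonoidHom.map_closure, hσ]
  exact Subgroup.map_top_of_surjective _ (MulAut.conj γ⁻¹).surjective

lemma li_cast {m m' : ℕ} (h : m = m') (C : Fin m' → Set G) :
    li G m (C ∘ Fin.cast h) = li G m' C := by
  subst h; rfl

end ClassVectorsAux

namespace ClassVectorsAux

variable {G : Type*} [Group G]

lemma step [Finite G] (hZ : Subgroup.center G = ⊥) {n0 M : ℕ}
    (C : Fin (n0 + M) → Set G) (hC : ∀ i, IsNontrivialConjClass (C i))
    {τ : Fin n0 → G} (hτ : τ ∈ GenSystems G n0 (fun i => C (Fin.castAdd M i))) :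
    Nat.card G * li G M (fun i => C (Fin.natAdd n0 i)) ≤ li G (n0 + M) C := by
  obtain ⟨hτmem, hτprod, hτgen⟩ := hτ
  set D : Fin M → Set G := fun i => C (Fin.natAdd n0 i) with hD
  have key : ∀ (γ : G) (q : Quot (fun σ τ : GenSystems G M D => SimConjT σ.1 τ.1)),
      Fin.append (fun i => γ⁻¹ * τ i * γ) (Quot.out q).1 ∈ GenSystems G (n0 + M) C := by
    intro γ q
    obtain ⟨hβmem, hβprod, hβgen⟩ := (Quot.out q).2
    refine ⟨?_, ?_, ?_⟩
    · intro i
      refine Fin.addCases (fun i0 => ?_) (fun i1 => ?_) i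
      · rw [Fin.append_left]
        exact conj_mem (hC _) (hτmem i0) γ
      · rw [Fin.append_right]
        exact hβmem i1
    · rw [List.ofFn_add]
      simp only [Fin.append_left, Fin.append_left', Fin.append_right]
      rw [List.prod_append, prod_ofFn_conj, hτprod, hβprod]
      group
    · rw [eq_top_iff, ← closure_conj hτgen γ]
      apply Subgroup.closure_mono
      rintro x ⟨i, rfl⟩
      exact ⟨Fin.castAdd M i, Fin.append_left _ _ i⟩
  let F : G × Quot (fun σ τ : GenSystems G M D => SimConjT σ.1 τ.1) →
      Quot (fun σ τ : GenSystems G (n0 + M) C => SimConjT σ.1 τ.1) :=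
    fun p => Quot.mk _ ⟨_, key p.1 p.2⟩
  have hinj : Function.Injective F := by
    rintro ⟨γ, q⟩ ⟨γ', q'⟩ hF
    have hrel : SimConjT (Fin.append (fun i => γ⁻¹ * τ i * γ) (Quot.out q).1)
        (Fin.append (fun i => γ'⁻¹ * τ i * γ') (Quot.out q').1) :=
      ((genRel_equivalence _ C).eqvGen_iff).mp (Quot.eq.mp hF)
    obtain ⟨δ, hδ⟩ := hrel
    have hright : ∀ i, δ⁻¹ * (Quot.out q).1 i * δ = (Quot.out q').1 i := by
      intro i
      have h := hδ (Fin.natAdd n0 i)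
      rwa [Fin.append_right, Fin.append_right] at h
    have hqq : q = q' := by
      have h : Quot.mk (fun σ τ : GenSystems G M D => SimConjT σ.1 τ.1) (Quot.out q)
          = Quot.mk (fun σ τ : GenSystems G M D => SimConjT σ.1 τ.1) (Quot.out q') :=
        Quot.sound ⟨δ, hright⟩
      rwa [Quot.out_eq, Quot.out_eq] at h
    subst hqq
    have hδ1 : δ = 1 := eq_one_of_fix hZ (Quot.out q).2.2.2 hright
    have hleft : ∀ i, γ⁻¹ * τ i * γ = γ'⁻¹ * τ i * γ' := by
      intro i
      have h := hδ (Fin.castAdd M i)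
      rwa [Fin.append_left, Fin.append_left, hδ1, inv_one, one_mul, mul_one] at h
    have hγ : γ = γ' := by
      have h2 : ∀ i, (γ * γ'⁻¹)⁻¹ * τ i * (γ * γ'⁻¹) = τ i := by
        intro i
        calc (γ * γ'⁻¹)⁻¹ * τ i * (γ * γ'⁻¹)
            = γ' * (γ⁻¹ * τ i * γ) * γ'⁻¹ := by group
          _ = γ' * (γ'⁻¹ * τ i * γ') * γ'⁻¹ := by rw [hleft i]
          _ = τ i := by group
      have h3 := eq_one_of_fix hZ hτgen h2
      rwa [mul_inv_eq_one] at h3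
    rw [hγ]
  have hcard := Nat.card_le_card_of_injective F hinj
  rw [Nat.card_prod] at hcard
  exact hcard

end ClassVectorsAux

namespace ClassVectorsAux

variable {G : Type*} [Group G]

lemma nonempty_gen [Finite G] {n : ℕ} {D : Fin n → Set G} (h : 1 ≤ li G n D) :
    ∃ τ, τ ∈ GenSystems G n D := by
  have hpos : 0 < Nat.card (Quot (fun σ τ : GenSystems G n D => SimConjT σ.1 τ.1)) := h
  obtain ⟨⟨q⟩, -⟩ := Nat.card_pos_iff.mp hpos
  exact ⟨(Quot.out q).1, (Quot.out q).2⟩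

lemma aux [Finite G] (hZ : Subgroup.center G = ⊥) {n0 : ℕ} (hn0 : 3 ≤ n0)
    (H : ∀ n, n0 ≤ n → n ≤ 2 * n0 - 1 → ∀ D : Fin n → Set G,
      (∀ i, IsNontrivialConjClass (D i)) → 1 ≤ li G n D) :
    ∀ j m, n0 ≤ m → m ≤ 2 * n0 - 1 → ∀ C : Fin (j * n0 + m) → Set G,
      (∀ i, IsNontrivialConjClass (C i)) → Nat.card G ^ j ≤ li G (j * n0 + m) C := by
  intro j
  induction j with
  | zero =>
    intro m h1 h2 C hC
    have he : m = 0 * n0 + m := by omega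
    rw [pow_zero, ← li_cast he C]
    exact H m h1 h2 (C ∘ Fin.cast he) (fun i => hC _)
  | succ j ih =>
    intro m h1 h2 C hC
    have he : n0 + (j * n0 + m) = (j + 1) * n0 + m := by ring
    set C' : Fin (n0 + (j * n0 + m)) → Set G := C ∘ Fin.cast he with hC'def
    have hC' : ∀ i, IsNontrivialConjClass (C' i) := fun i => hC _
    obtain ⟨τ, hτ⟩ : ∃ τ, τ ∈ GenSystems G n0 (fun i => C' (Fin.castAdd _ i)) :=
      nonempty_gen (H n0 le_rfl (by omega) _ (fun i => hC' _))
    have hstep := step hZ C' hC' hτ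
    have htail := ih m h1 h2 (fun i => C' (Fin.natAdd n0 i)) (fun i => hC' _)
    calc Nat.card G ^ (j + 1) = Nat.card G * Nat.card G ^ j := by ring
      _ ≤ Nat.card G * li G (j * n0 + m) (fun i => C' (Fin.natAdd n0 i)) :=
          Nat.mul_le_mul_left _ htail
      _ ≤ li G (n0 + (j * n0 + m)) C' := hstep
      _ = li G ((j + 1) * n0 + m) C := li_cast he C

end ClassVectorsAux


open ClassVectors in
/-- Proposition: if `l^i(D₁,…,D_n) ≥ 1` for all nontrivial class vectors of
length `n` with `n₀ ≤ n ≤ 2n₀ − 1`, then `l^i(C₁,…,C_m) ≥ |G|^{k−1}` for all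
nontrivial class vectors of length `m = k·n₀ + l` with `k ≥ 2` and
`0 ≤ l ≤ n₀ − 1`. -/
theorem statement19 {G : Type*} [Group G] [Finite G]
    (hZ : Subgroup.center G = ⊥)
    (n0 : ℕ) (hn0 : 3 ≤ n0)
    (H : ∀ n, n0 ≤ n → n ≤ 2 * n0 - 1 → ∀ D : Fin n → Set G,
      (∀ i, IsNontrivialConjClass (D i)) → 1 ≤ li G n D) :
    ∀ k l : ℕ, 2 ≤ k → l ≤ n0 - 1 →
      ∀ C : Fin (k * n0 + l) → Set G,
        (∀ i, IsNontrivialConjClass (C i)) →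
        Nat.card G ^ (k - 1) ≤ li G (k * n0 + l) C := by
  intro k l hk hl C hC
  obtain ⟨t, rfl⟩ : ∃ t, k = 2 + t := ⟨k - 2, by omega⟩
  have he : (2 + t - 1) * n0 + (n0 + l) = (2 + t) * n0 + l := by
    have h1 : 2 + t - 1 = 1 + t := by omega
    rw [h1]; ring
  rw [← ClassVectorsAux.li_cast he C]
  exact ClassVectorsAux.aux hZ hn0 H (2 + t - 1) (n0 + l) (by omega) (by omega)
    (C ∘ Fin.cast he) (fun i => hC _)
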